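/- arXiv:2111.15465 — 12 statements merged into one kernel-verified Lean document; each statement's English description precedes it below -/
import Mathlib

section
/- For positive reals a > b > 0, a^a + b^b > a^b + b^a. -/
open Real

/-- Bernoulli tangent bound: for `0 < p ≤ 1` and `x > 0`, `x ^ p ≤ 1 + p * (x - 1)`. -/
lemma bern_aux {p x : ℝ} (hp1 : 0 ≤ p) (hp2 : p ≤ 1) (hx : 0 ≤ x) :
    x ^ p ≤ 1 + p * (x - 1) := by
  have h := rpow_one_add_le_one_add_mul_self (s := x - 1) (by linarith) hp1 hp2
  simpa using h

theorem stmt_0 (a b : ℝ) (hb : 0 < b) (hab : b < a) :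
    a ^ b + b ^ a < a ^ a + b ^ b := by
  have ha : 0 < a := hb.trans hab
  set c : ℝ := a - b with hc
  have hc0 : 0 < c := by simp [hc]; linarith
  have ea : a ^ a = a ^ b * a ^ c := by
    rw [← Real.rpow_add ha, hc]; ring_nf
  have eb : b ^ a = b ^ b * b ^ c := by
    rw [← Real.rpow_add hb, hc]; ring_nf
  have hQ : 0 < b ^ b := Real.rpow_pos_of_pos hb b
  have hP : 0 < a ^ b := Real.rpow_pos_of_pos ha b
  have hPQ : b ^ b < a ^ b := Real.rpow_lt_rpow hb.le hab hb
  have hAB : b ^ c < a ^ c := Real.rpow_lt_rpow hb.le hab hc0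
  rcases le_or_gt 1 a with h1a | h1a
  · -- case 1 ≤ a : a^c ≥ 1
    have hA1 : 1 ≤ a ^ c := Real.one_le_rpow h1a hc0.le
    nlinarith [mul_nonneg (sub_nonneg.mpr hPQ.le) (sub_nonneg.mpr hA1),
      mul_pos hQ (sub_pos.mpr hAB)]
  · -- case a < 1
    have hc1 : c < 1 := by simp [hc]; linarith
    have hA : 0 < a ^ c := Real.rpow_pos_of_pos ha c
    have hA1 : a ^ c < 1 := Real.rpow_lt_one ha.le h1a hc0
    -- (i) : b^c * a ≤ a^c * (a - c^2)
    have hi : b ^ c * a ≤ a ^ c * (a - c ^ 2) := by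
      have h := bern_aux hc0.le hc1.le (x := b / a) (by positivity)
      rw [Real.div_rpow hb.le ha.le] at h
      have := mul_le_mul_of_nonneg_left h (le_of_lt (mul_pos hA ha))
      have hane : a ≠ 0 := ha.ne'
      have : b ^ c * a ≤ a ^ c * a * (1 + c * (b / a - 1)) := by
        calc b ^ c * a = a ^ c * a * (b ^ c / a ^ c) := by field_simp
        _ ≤ a ^ c * a * (1 + c * (b / a - 1)) := by
            exact mul_le_mul_of_nonneg_left h (le_of_lt (mul_pos hA ha))
      calc b ^ c * a ≤ a ^ c * a * (1 + c * (b / a - 1)) := this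
        _ = a ^ c * (a - c ^ 2) := by field_simp; ring
    -- (ii) : a ≤ a^c * (a + c * (1 - a))
    have hii : a ≤ a ^ c * (a + c * (1 - a)) := by
      have h := bern_aux hc0.le hc1.le (x := 1 / a) (by positivity)
      rw [Real.div_rpow zero_le_one ha.le, Real.one_rpow] at h
      have hane : a ≠ 0 := ha.ne'
      calc a = a ^ c * a * (1 / a ^ c) := by field_simp
        _ ≤ a ^ c * a * (1 + c * (1 / a - 1)) := by
            exact mul_le_mul_of_nonneg_left h (le_of_lt (mul_pos hA ha))
        _ = a ^ c * (a + c * (1 - a)) := by field_simp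
    -- (iii) : a^b ≤ b^b * (1 + c)
    have hiii : a ^ b ≤ b ^ b * (1 + c) := by
      have h := bern_aux hb.le (le_of_lt (by linarith : b < 1)) (x := a / b) (by positivity)
      rw [Real.div_rpow ha.le hb.le] at h
      have hbne : b ≠ 0 := hb.ne'
      calc a ^ b = b ^ b * (a ^ b / b ^ b) := by field_simp
        _ ≤ b ^ b * (1 + b * (a / b - 1)) := by
            exact mul_le_mul_of_nonneg_left h hQ.le
        _ = b ^ b * (1 + c) := by field_simp; rw [hc]
    -- assemble
    rw [ea, eb]
    nlinarith [mul_le_mul_of_nonneg_left hii hQ.le,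
      mul_le_mul_of_nonneg_left hi hQ.le,
      mul_le_mul_of_nonneg_right hiii (le_of_lt (mul_pos hA hc0)),
      mul_le_mul_of_nonneg_right hiii (mul_nonneg (sub_nonneg.mpr hA1.le) ha.le),
      mul_pos (mul_pos (mul_pos hQ hA) hc0) hc0,
      mul_pos (sub_pos.mpr hA1) ha,
      mul_le_mul_of_nonneg_left hii (mul_nonneg hQ.le hc0.le)]
end

section
/- For any n ≥ 2 and positive reals a_1 ≤ a_2 ≤ ... ≤ a_n, the cyclic sum a_1^{a_2} + a_2^{a_3} + ... + a_{n-1}^{a_n} + a_n^{a_1} is at most a_1^{a_1} + a_2^{a_2} + ... + a_n^{a_n}. -/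
-- key two/three variable lemma
lemma lemL (x y z : ℝ) (hx : 0 < x) (hxy : x ≤ y) (hyz : y ≤ z) :
    y ^ z + z ^ x ≤ y ^ x + z ^ z := by
  have hy : 0 < y := lt_of_lt_of_le hx hxy
  have hz : 0 < z := lt_of_lt_of_le hy hyz
  have hxz : x ≤ z := hxy.trans hyz
  rcases le_or_gt 1 y with h1y | hy1
  · -- 1 ≤ y ≤ z
    have e1 : y ^ z = y ^ x * y ^ (z - x) := by
      rw [← Real.rpow_add hy]; ring_nf
    have e2 : z ^ z = z ^ x * z ^ (z - x) := by
      rw [← Real.rpow_add hz]; ring_nf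
    have h1 : y ^ x ≤ z ^ x := Real.rpow_le_rpow hy.le hyz hx.le
    have h2 : y ^ (z - x) ≤ z ^ (z - x) := Real.rpow_le_rpow hy.le hyz (by linarith)
    have h3 : (1:ℝ) ≤ y ^ (z - x) := Real.one_le_rpow h1y (by linarith)
    have h4 : (0:ℝ) < y ^ x := Real.rpow_pos_of_pos hy x
    nlinarith
  rcases le_or_gt 1 z with h1z | hz1
  · -- y < 1 ≤ z
    have h1 : y ^ z ≤ y ^ x := Real.rpow_le_rpow_of_exponent_ge hy hy1.le hxz
    have h2 : z ^ x ≤ z ^ z := Real.rpow_le_rpow_of_exponent_le h1z hxz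
    linarith
  · -- x ≤ y ≤ z < 1
    rcases le_or_gt (x / z) (y ^ (z - x)) with hcase | hcase
    · -- monotone case
      set f : ℝ → ℝ := fun t => t ^ z - t ^ x with hf
      have hdiff : ∀ t ∈ Set.Icc y z, HasDerivAt f (z * t ^ (z-1) - x * t ^ (x-1)) t := by
        intro t ht
        have ht0 : 0 < t := lt_of_lt_of_le hy ht.1
        exact ((Real.hasDerivAt_rpow_const (Or.inl ht0.ne')).sub
          (Real.hasDerivAt_rpow_const (Or.inl ht0.ne')))
      have hm : MonotoneOn f (Set.Icc y z) := by
        apply monotoneOn_of_deriv_nonneg (convex_Icc y z)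
        · exact fun t ht => ((hdiff t ht).continuousAt).continuousWithinAt
        · intro t ht
          rw [interior_Icc] at ht
          exact ((hdiff t (Set.mem_Icc_of_Ioo ht)).differentiableAt).differentiableWithinAt
        · intro t ht
          rw [interior_Icc] at ht
          have ht0 : 0 < t := lt_of_lt_of_le hy ht.1.le
          rw [(hdiff t (Set.mem_Icc_of_Ioo ht)).deriv]
          have e : t ^ (z-1) = t ^ (x-1) * t ^ (z-x) := by
            rw [← Real.rpow_add ht0]; ring_nf
          have h1 : y ^ (z-x) ≤ t ^ (z-x) := Real.rpow_le_rpow hy.le ht.1.le (by linarith)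
          have h2 : (0:ℝ) < t ^ (x-1) := Real.rpow_pos_of_pos ht0 _
          have h3 : x ≤ z * t ^ (z - x) := by
            have h4 : x / z ≤ t ^ (z-x) := le_trans hcase h1
            calc x = z * (x / z) := by field_simp
              _ ≤ z * t ^ (z-x) := by nlinarith
          rw [e]
          nlinarith
      have key := hm (Set.left_mem_Icc.2 hyz) (Set.right_mem_Icc.2 hyz) hyz
      simp only [hf] at key
      linarith
    · -- steep case : y ^ (z-x) < x / z
      have hlz : Real.log z < 0 := Real.log_neg hz hz1
      have e1 : y ^ z = y ^ x * y ^ (z - x) := by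
        rw [← Real.rpow_add hy]; ring_nf
      have e2 : z ^ z = z ^ x * z ^ (z - x) := by
        rw [← Real.rpow_add hz]; ring_nf
      have hyx : (0:ℝ) < y ^ x := Real.rpow_pos_of_pos hy x
      have hzx : (0:ℝ) < z ^ x := Real.rpow_pos_of_pos hz x
      -- A3 : 1 - z^(z-x) ≤ (z-x) * (-log z)
      have A3 : 1 - z ^ (z - x) ≤ (z - x) * (-Real.log z) := by
        have hzz : z ^ (z - x) = Real.exp ((z - x) * Real.log z) := by
          rw [Real.rpow_def_of_pos hz, mul_comm]
        rw [hzz]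
        nlinarith [Real.add_one_le_exp ((z - x) * Real.log z)]
      -- A4 : z * (-log z) ≤ exp (-1)
      have A4 : z * (-Real.log z) ≤ Real.exp (-1) := by
        have h := Real.log_le_sub_one_of_pos (show (0:ℝ) < Real.exp (-1) / z by positivity)
        rw [Real.log_div (Real.exp_ne_zero _) hz.ne', Real.log_exp] at h
        have h2 : -Real.log z ≤ Real.exp (-1) / z := by linarith
        calc z * (-Real.log z) ≤ z * (Real.exp (-1) / z) :=
              mul_le_mul_of_nonneg_left h2 hz.le
          _ = Real.exp (-1) := by field_simp
      -- A5 : z^x * exp (-1) ≤ y^x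
      have A5 : z ^ x * Real.exp (-1) ≤ y ^ x := by
        have hxlx : x * (Real.log z - Real.log y) ≤ 1 := by
          have h1 : Real.log y ≥ Real.log x := Real.log_le_log hx hxy
          have h2 : -Real.log x ≤ 1 / x - 1 := by
            have := Real.log_le_sub_one_of_pos (show (0:ℝ) < 1 / x by positivity)
            rw [Real.log_div one_ne_zero hx.ne', Real.log_one] at this
            linarith
          have h3 : x * (-Real.log x) ≤ 1 - x := by
            have := mul_le_mul_of_nonneg_left h2 hx.le
            field_simp at this ⊢
            linarith
          nlinarith
        have hyzx : (y / z) ^ x = Real.exp (x * Real.log (y / z)) := by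
          rw [Real.rpow_def_of_pos (by positivity), mul_comm]
        have hlog : Real.log (y / z) = Real.log y - Real.log z := Real.log_div hy.ne' hz.ne'
        have hge : Real.exp (-1) ≤ (y / z) ^ x := by
          rw [hyzx]
          apply Real.exp_le_exp.2
          rw [hlog]; nlinarith
        have hmul : (y / z) ^ x * z ^ x = y ^ x := by
          rw [← Real.mul_rpow (by positivity) hz.le]
          congr 1
          field_simp
        nlinarith
      -- A2 : 1 - x/z ≤ 1 - y^(z-x)
      have A2 : 1 - x / z ≤ 1 - y ^ (z - x) := by linarith
      have hxz' : 0 < x / z := by positivity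
      -- main assembly: y^x - y^z ≥ z^x - z^z
      have L3 : z ^ x * (1 - z ^ (z - x)) ≤ z ^ x * ((z - x) * (-Real.log z)) :=
        mul_le_mul_of_nonneg_left A3 hzx.le
      have L4 : z ^ x * ((z - x) * (-Real.log z)) ≤ y ^ x * (z - x) / z := by
        have hs : 0 ≤ z - x := by linarith
        have h5 : z ^ x * (z * (-Real.log z)) ≤ y ^ x := le_trans (by nlinarith) A5
        rw [div_eq_mul_inv]
        have hzinv : 0 < z⁻¹ := by positivity
        have h6 := mul_le_mul_of_nonneg_right h5 (mul_nonneg hs hzinv.le)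
        calc z ^ x * ((z - x) * (-Real.log z))
            = z ^ x * (z * (-Real.log z)) * ((z - x) * z⁻¹) := by
              field_simp
          _ ≤ y ^ x * ((z - x) * z⁻¹) := h6
          _ = y ^ x * (z - x) * z⁻¹ := by ring
      have final : z ^ x * (1 - z ^ (z - x)) ≤ y ^ x * (1 - y ^ (z - x)) := by
        calc z ^ x * (1 - z ^ (z - x)) ≤ z ^ x * ((z - x) * (-Real.log z)) := L3
          _ ≤ y ^ x * (z - x) / z := L4
          _ = y ^ x * (1 - x / z) := by field_simp
          _ ≤ y ^ x * (1 - y ^ (z - x)) :=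
              mul_le_mul_of_nonneg_left (by linarith) hyx.le
      rw [e1, e2]
      nlinarith [final]
lemma auxSum (b : ℕ → ℝ) (hpos : ∀ i, 0 < b i) (hmono : Monotone b) :
    ∀ n : ℕ, (∑ i ∈ Finset.range (n+1), b i ^ b (i+1)) + b (n+1) ^ b 0
      ≤ ∑ i ∈ Finset.range (n+2), b i ^ b i := by
  intro n
  induction n with
  | zero =>
    simp only [Finset.sum_range_succ, Finset.sum_range_one, Finset.sum_range_zero, zero_add]
    have := lemL (b 0) (b 0) (b 1) (hpos 0) le_rfl (hmono (by omega))
    linarith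
  | succ n ih =>
    rw [Finset.sum_range_succ (fun i => b i ^ b (i+1)) (n+1)]
    rw [Finset.sum_range_succ (fun i => b i ^ b i) (n+2)]
    have hL := lemL (b 0) (b (n+1)) (b (n+2)) (hpos 0) (hmono (Nat.zero_le _))
      (hmono (by omega))
    linarith

theorem stmt_1 (n : ℕ) (hn : 2 ≤ n) (a : Fin n → ℝ)
    (hpos : ∀ i, 0 < a i) (hmono : Monotone a) :
    ∑ i : Fin n, a i ^ a ⟨(i.val + 1) % n, Nat.mod_lt _ (by omega)⟩ ≤
      ∑ i : Fin n, a i ^ a i := by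
  obtain ⟨m, rfl⟩ : ∃ m, n = m + 2 := ⟨n - 2, by omega⟩
  set b : ℕ → ℝ := fun i => a ⟨min i (m+1), by omega⟩ with hb
  have hbpos : ∀ i, 0 < b i := fun i => hpos _
  have hbmono : Monotone b := by
    intro i j hij
    exact hmono (Fin.mk_le_mk.mpr (by omega))
  have hba : ∀ (k : ℕ) (h : k < m+2), b k = a ⟨k, h⟩ := by
    intro k h
    have he : (⟨min k (m+1), by omega⟩ : Fin (m+2)) = ⟨k, h⟩ := by
      ext
      simp only []
      omega
    simp only [hb, he]
  have hLHS : ∑ i : Fin (m+2), a i ^ a ⟨(i.val + 1) % (m+2), Nat.mod_lt _ (by omega)⟩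
      = ∑ i ∈ Finset.range (m+2), b i ^ b ((i+1) % (m+2)) := by
    rw [← Fin.sum_univ_eq_sum_range (fun k => b k ^ b ((k+1) % (m+2))) (m+2)]
    apply Finset.sum_congr rfl
    intro i _
    rw [hba i.val i.isLt, hba ((i.val+1) % (m+2)) (Nat.mod_lt _ (by omega))]
  have hRHS : ∑ i : Fin (m+2), a i ^ a i
      = ∑ i ∈ Finset.range (m+2), b i ^ b i := by
    rw [← Fin.sum_univ_eq_sum_range (fun k => b k ^ b k) (m+2)]
    apply Finset.sum_congr rfl
    intro i _
    rw [hba i.val i.isLt]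
  rw [hLHS, hRHS]
  have split : ∑ i ∈ Finset.range (m+2), b i ^ b ((i+1) % (m+2))
      = (∑ i ∈ Finset.range (m+1), b i ^ b (i+1)) + b (m+1) ^ b 0 := by
    rw [Finset.sum_range_succ]
    congr 1
    · apply Finset.sum_congr rfl
      intro i hi
      rw [Nat.mod_eq_of_lt (by simp only [Finset.mem_range] at hi; omega)]
    · rw [Nat.mod_self]
  rw [split]
  exact auxSum b hbpos hbmono m
end

section
/- For all positive reals a and b, a^b + b^a > 1. -/
lemma key (x y : ℝ) (hx : 0 < x) (hx1 : x ≤ 1) (hy : 0 < y) (hy1 : y ≤ 1) :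
    x / (x + y - x * y) ≤ x ^ y := by
  have hd : 0 < x + y - x * y := by nlinarith
  have hs : (0:ℝ) ≤ (1 - x) / x := div_nonneg (by linarith) hx.le
  have h1 : ((1 : ℝ) + (1 - x) / x) ^ y ≤ 1 + y * ((1 - x) / x) :=
    rpow_one_add_le_one_add_mul_self (by linarith) hy.le hy1
  have hxne : x ≠ 0 := hx.ne'
  have e1 : (1 : ℝ) + (1 - x) / x = 1 / x := by field_simp; ring
  have e2 : (1 : ℝ) + y * ((1 - x) / x) = (x + y - x * y) / x := by field_simp; ring
  rw [e1, e2] at h1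
  have h2 : (1 / x) ^ y = 1 / x ^ y := by
    rw [Real.div_rpow zero_le_one hx.le, Real.one_rpow]
  rw [h2] at h1
  have hxy : 0 < x ^ y := Real.rpow_pos_of_pos hx y
  rw [div_le_div_iff₀ hxy hx] at h1
  rw [div_le_iff₀ hd]
  nlinarith

theorem stmt_6 (a b : ℝ) (ha : 0 < a) (hb : 0 < b) :
    1 < a ^ b + b ^ a := by
  rcases le_or_gt 1 a with h | h
  · have h1 : (1:ℝ) ≤ a ^ b := Real.one_le_rpow h hb.le
    have h2 : 0 < b ^ a := Real.rpow_pos_of_pos hb a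
    linarith
  rcases le_or_gt 1 b with h' | h'
  · have h1 : (1:ℝ) ≤ b ^ a := Real.one_le_rpow h' ha.le
    have h2 : 0 < a ^ b := Real.rpow_pos_of_pos ha b
    linarith
  · have k1 := key a b ha h.le hb h'.le
    have k2 := key b a hb h'.le ha h.le
    have hd : 0 < a + b - a * b := by nlinarith
    have : 1 < a / (a + b - a * b) + b / (b + a - b * a) := by
      rw [div_add_div _ _ hd.ne' (by rw [add_comm b a, mul_comm b a]; exact hd.ne')]
      rw [lt_div_iff₀ (mul_pos hd (by rw [add_comm b a, mul_comm b a]; exact hd))]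
      nlinarith [mul_pos hd (mul_pos ha hb)]
    linarith
end

section
/- For any n ≥ 2 and positive reals a_1, ..., a_n, the sum ∑_{i=1}^n a_i^{a_{n+1-i}} is strictly greater than n/2. -/
open Real

lemma aux_rpow_ge (x y : ℝ) (hx0 : 0 < x) (hx1 : x < 1) (hy0 : 0 < y) (hy1 : y < 1) :
    x / (x + y - x * y) ≤ x ^ y := by
  set u : ℝ := (1 - x) / x with hu
  have hu0 : 0 ≤ u := div_nonneg (by linarith) hx0.le
  have h1u : 1 + u = 1 / x := by rw [hu]; field_simp; ring
  have hbern : (1 + u) ^ y ≤ 1 + y * u :=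
    rpow_one_add_le_one_add_mul_self (by linarith) hy0.le hy1.le
  have hd : 1 + y * u = (x + y - x * y) / x := by rw [hu]; field_simp; ring
  have hdpos : 0 < x + y - x * y := by nlinarith
  rw [h1u, hd] at hbern
  have hxy : (0:ℝ) < (1/x) ^ y := Real.rpow_pos_of_pos (by positivity) y
  have hinv : x / (x + y - x * y) ≤ ((1/x) ^ y)⁻¹ := by
    rw [div_le_iff₀ hdpos] at *
    rw [← div_le_iff₀ hdpos]
    have : ((x + y - x * y) / x)⁻¹ ≤ ((1/x) ^ y)⁻¹ :=
      inv_anti₀ hxy hbern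
    calc x / (x + y - x * y) = ((x + y - x * y) / x)⁻¹ := by
          rw [inv_div]
      _ ≤ ((1/x) ^ y)⁻¹ := this
  calc x / (x + y - x * y) ≤ ((1/x) ^ y)⁻¹ := hinv
    _ = x ^ y := by
        rw [one_div, Real.inv_rpow hx0.le, inv_inv]

lemma aux_key (x y : ℝ) (hx : 0 < x) (hy : 0 < y) : 1 < x ^ y + y ^ x := by
  rcases le_or_gt 1 x with h1x | h1x
  · have h1 : (1:ℝ) ≤ x ^ y := Real.one_le_rpow h1x hy.le
    have h2 : (0:ℝ) < y ^ x := Real.rpow_pos_of_pos hy x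
    linarith
  rcases le_or_gt 1 y with h1y | h1y
  · have h1 : (1:ℝ) ≤ y ^ x := Real.one_le_rpow h1y hx.le
    have h2 : (0:ℝ) < x ^ y := Real.rpow_pos_of_pos hx y
    linarith
  · have hd : 0 < x + y - x * y := by nlinarith
    have h1 := aux_rpow_ge x y hx h1x hy h1y
    have h2 := aux_rpow_ge y x hy h1y hx h1x
    have h2' : y / (x + y - x * y) ≤ y ^ x := by
      have : y + x - y * x = x + y - x * y := by ring
      rwa [this] at h2
    have hsum : (x + y) / (x + y - x * y) ≤ x ^ y + y ^ x := by
      rw [add_div]; exact add_le_add h1 h2'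
    have : 1 < (x + y) / (x + y - x * y) := by
      rw [lt_div_iff₀ hd]; nlinarith
    linarith

theorem stmt_7 (n : ℕ) (hn : 2 ≤ n) (a : Fin n → ℝ) (hpos : ∀ i, 0 < a i) :
    (n : ℝ) / 2 < ∑ i : Fin n, a i ^ a (Fin.rev i) := by
  have hrev : ∑ i : Fin n, a i ^ a (Fin.rev i)
      = ∑ i : Fin n, a (Fin.rev i) ^ a i := by
    rw [← Equiv.sum_comp (Fin.revPerm (n := n)) (fun i => a i ^ a (Fin.rev i))]
    simp [Fin.revPerm_apply, Fin.rev_rev]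
  have hlt : (n : ℝ) < ∑ i : Fin n, (a i ^ a (Fin.rev i) + a (Fin.rev i) ^ a i) := by
    have hne : (Finset.univ : Finset (Fin n)).Nonempty := by
      have : Nonempty (Fin n) := ⟨⟨0, by omega⟩⟩
      exact Finset.univ_nonempty
    calc (n : ℝ) = ∑ _i : Fin n, (1:ℝ) := by simp
      _ < _ := Finset.sum_lt_sum_of_nonempty hne
          (fun i _ => aux_key (a i) (a (Fin.rev i)) (hpos i) (hpos _))
  rw [Finset.sum_add_distrib, ← hrev] at hlt
  linarith
end

section
/- For all real x, y with 0 < x < y < 1, one has (y - x) log x + log y - log x > 0. -/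
theorem stmt_8 (x y : ℝ) (hx : 0 < x) (hxy : x < y) (hy : y < 1) :
    0 < (y - x) * Real.log x + Real.log y - Real.log x := by
  have hx1 : x < 1 := hxy.trans hy
  have hlx : Real.log x < 0 := Real.log_neg hx hx1
  -- strict concavity of log: (1-y)/(1-x) * log x < log y
  have hconc := strictConcaveOn_log_Ioi.2 (Set.mem_Ioi.mpr hx)
      (Set.mem_Ioi.mpr one_pos) (ne_of_lt hx1)
      (show (0:ℝ) < (1 - y) / (1 - x) by apply div_pos <;> linarith)
      (show (0:ℝ) < (y - x) / (1 - x) by apply div_pos <;> linarith)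
      (by have h1 : (1:ℝ) - x ≠ 0 := by linarith
          field_simp; ring)
  have hyx : ((1 - y) / (1 - x)) • x + ((y - x) / (1 - x)) • (1 : ℝ) = y := by
    have h1 : (1:ℝ) - x ≠ 0 := by linarith
    simp only [smul_eq_mul]; rw [div_mul_eq_mul_div, div_mul_eq_mul_div, ← add_div, div_eq_iff h1]
    ring
  rw [hyx] at hconc
  simp only [smul_eq_mul, Real.log_one, mul_zero, add_zero] at hconc
  have hkey : (1 - y) * Real.log x < (1 - x) * Real.log y := by
    rw [div_mul_eq_mul_div, div_lt_iff₀ (by linarith)] at hconc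
    nlinarith [hconc]
  nlinarith [hkey, mul_pos (sub_pos.mpr hxy) hx, mul_neg_of_pos_of_neg (mul_pos (sub_pos.mpr hxy) hx) hlx]
end

section
/- If x, y, z are positive reals with max(x, z) ≤ y and y ≥ 1, then y^y + z^x ≥ z^y + y^x. -/
theorem stmt_9 (x y z : ℝ) (hx : 0 < x) (hz : 0 < z)
    (hxy : x ≤ y) (hzy : z ≤ y) (hy : 1 ≤ y) :
    z ^ y + y ^ x ≤ y ^ y + z ^ x := by
  have hy0 : (0:ℝ) < y := lt_of_lt_of_le one_pos hy
  have hd : 0 ≤ y - x := by linarith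
  have hzy' : z ^ y = z ^ x * z ^ (y - x) := by
    rw [← Real.rpow_add hz]; ring_nf
  have hyy : y ^ y = y ^ x * y ^ (y - x) := by
    rw [← Real.rpow_add hy0]; ring_nf
  rw [hzy', hyy]
  have hyd : 1 ≤ y ^ (y - x) := Real.one_le_rpow hy hd
  have hyx0 : 0 ≤ y ^ x := (Real.rpow_pos_of_pos hy0 x).le
  have hzx0 : 0 ≤ z ^ x := (Real.rpow_pos_of_pos hz x).le
  have key : z ^ x * (z ^ (y - x) - 1) ≤ y ^ x * (y ^ (y - x) - 1) := by
    rcases le_or_gt z 1 with h1 | h1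
    · have : z ^ (y - x) ≤ 1 := Real.rpow_le_one hz.le h1 hd
      have l : z ^ x * (z ^ (y - x) - 1) ≤ 0 :=
        mul_nonpos_of_nonneg_of_nonpos hzx0 (by linarith)
      have r : 0 ≤ y ^ x * (y ^ (y - x) - 1) :=
        mul_nonneg hyx0 (by linarith)
      linarith
    · have hzd : 1 ≤ z ^ (y - x) := Real.one_le_rpow h1.le hd
      have h2 : z ^ x ≤ y ^ x := Real.rpow_le_rpow hz.le hzy hx.le
      have h3 : z ^ (y - x) ≤ y ^ (y - x) := Real.rpow_le_rpow hz.le hzy hd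
      exact mul_le_mul h2 (by linarith) (by linarith) hyx0
  nlinarith [key]
end

section
/- If x, y, z are positive reals with max(x, z) ≤ y, y ≥ 1, and y^y + z^x = z^y + y^x, then y = z or y = x. -/
theorem stmt_10 (x y z : ℝ) (hx : 0 < x) (hz : 0 < z)
    (hxy : x ≤ y) (hzy : z ≤ y) (hy : 1 ≤ y)
    (heq : y ^ y + z ^ x = z ^ y + y ^ x) :
    y = z ∨ y = x := by
  rcases eq_or_lt_of_le hxy with hxeq | hxlt
  · exact Or.inr hxeq.symm
  rcases eq_or_lt_of_le hzy with hzeq | hzlt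
  · exact Or.inl hzeq.symm
  exfalso
  have hy0 : (0:ℝ) < y := lt_of_lt_of_le one_pos hy
  -- first, z ≥ 1
  have hz1 : 1 ≤ z := by
    by_contra h
    push_neg at h
    have h1 : z ^ y < z ^ x := Real.rpow_lt_rpow_of_exponent_gt hz h hxlt
    have h2 : y ^ x ≤ y ^ y := Real.rpow_le_rpow_of_exponent_le hy hxy
    linarith
  set r := y / z with hr
  have hr1 : 1 < r := (one_lt_div hz).mpr hzlt
  have hr0 : 0 < r := lt_trans one_pos hr1
  have hmul : ∀ p : ℝ, z ^ p * r ^ p = y ^ p := by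
    intro p
    rw [← Real.mul_rpow hz.le hr0.le, hr, mul_div_cancel₀ _ (ne_of_gt hz)]
  have hzx : (0:ℝ) < z ^ x := Real.rpow_pos_of_pos hz x
  have hzxy : z ^ x ≤ z ^ y := Real.rpow_le_rpow_of_exponent_le hz1 hxy
  have hrxy : r ^ x < r ^ y := Real.rpow_lt_rpow_of_exponent_lt hr1 hxlt
  have hrx1 : 1 ≤ r ^ x := Real.one_le_rpow hr1.le hx.le
  have key : z ^ x * (r ^ y - 1) ≤ z ^ y * (r ^ y - 1) := by
    apply mul_le_mul_of_nonneg_right hzxy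
    nlinarith
  have key2 : z ^ x * (r ^ x - 1) < z ^ x * (r ^ y - 1) := by
    apply mul_lt_mul_of_pos_left _ hzx
    linarith
  have e1 : z ^ x * (r ^ x - 1) = y ^ x - z ^ x := by
    rw [mul_sub, hmul x]; ring
  have e2 : z ^ y * (r ^ y - 1) = y ^ y - z ^ y := by
    rw [mul_sub, hmul y]; ring
  nlinarith
end

section
/- If 0 < x ≤ z < y < 1, then y^x (y^{y-x} - 1) > z^x (z^{y-x} - 1). -/
open Real Set

lemma crux_12 (x y : ℝ) (hx : 0 < x) (hxy : x < y) (hy : y < 1) :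
    x ^ (1 + x - y) < y := by
  have hx1 : x < 1 := hxy.trans hy
  have hy0 : 0 < y := hx.trans hxy
  have hlx : Real.log x < 0 := Real.log_neg hx hx1
  -- log y > (1-y)/(1-x) * log x  by strict concavity of log between x and 1
  have ha : 0 < (1 - y) / (1 - x) := by
    apply div_pos <;> linarith
  have hb : 0 < (y - x) / (1 - x) := by
    apply div_pos <;> linarith
  have h1x : (1 : ℝ) - x ≠ 0 := by linarith
  have hab : (1 - y) / (1 - x) + (y - x) / (1 - x) = 1 := by
    field_simp
    ring
  have hcomb : (1 - y) / (1 - x) * x + (y - x) / (1 - x) = y := by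
    field_simp
    ring
  have hconc := strictConcaveOn_log_Ioi.2 (Set.mem_Ioi.2 hx) (Set.mem_Ioi.2 one_pos)
    (ne_of_lt hx1) ha hb hab
  simp only [smul_eq_mul, Real.log_one, mul_zero, mul_one, add_zero] at hconc
  rw [hcomb] at hconc
  -- (1+x-y) * log x ≤ (1-y)/(1-x) * log x
  have hkey : (1 + x - y) * Real.log x ≤ (1 - y) / (1 - x) * Real.log x := by
    apply mul_le_mul_of_nonpos_right _ hlx.le
    rw [div_le_iff₀ (by linarith : (0:ℝ) < 1 - x)]
    nlinarith [mul_nonneg hx.le (sub_nonneg.2 hxy.le)]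
  have hlog : (1 + x - y) * Real.log x < Real.log y := lt_of_le_of_lt hkey hconc
  calc x ^ (1 + x - y) = Real.exp ((1 + x - y) * Real.log x) := by
        rw [Real.rpow_def_of_pos hx, mul_comm]
    _ < Real.exp (Real.log y) := Real.exp_lt_exp.2 hlog
    _ = y := Real.exp_log hy0

theorem stmt_12 (x y z : ℝ) (hx : 0 < x) (hxz : x ≤ z) (hzy : z < y) (hy : y < 1) :
    z ^ x * (z ^ (y - x) - 1) < y ^ x * (y ^ (y - x) - 1) := by
  have hz0 : 0 < z := lt_of_lt_of_le hx hxz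
  have hy0 : 0 < y := hz0.trans hzy
  have hxy : x < y := lt_of_le_of_lt hxz hzy
  set f : ℝ → ℝ := fun t => t ^ x - t ^ y with hf
  -- f is strictly decreasing on [z, y]
  have hanti : StrictAntiOn f (Set.Icc z y) := by
    apply strictAntiOn_of_deriv_neg (convex_Icc z y)
    · apply ContinuousOn.sub
      · exact (continuousOn_id.rpow_const fun t _ => Or.inr hx.le)
      · exact (continuousOn_id.rpow_const fun t _ => Or.inr hy0.le)
    · intro t ht
      rw [interior_Icc] at ht
      have ht0 : 0 < t := hz0.trans ht.1
      have ht1 : t < 1 := ht.2.trans hy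
      have hd1 : HasDerivAt (fun s : ℝ => s ^ x) (x * t ^ (x - 1)) t :=
        Real.hasDerivAt_rpow_const (Or.inl (ne_of_gt ht0))
      have hd2 : HasDerivAt (fun s : ℝ => s ^ y) (y * t ^ (y - 1)) t :=
        Real.hasDerivAt_rpow_const (Or.inl (ne_of_gt ht0))
      have hd : HasDerivAt f (x * t ^ (x - 1) - y * t ^ (y - 1)) t := hd1.sub hd2
      rw [hd.deriv]
      -- show x * t^(x-1) < y * t^(y-1)
      have htx : x < t := lt_of_le_of_lt hxz ht.1
      -- key: x < y * t^(y-x)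
      have h1 : x ^ (y - x) < t ^ (y - x) :=
        Real.rpow_lt_rpow hx.le htx (by linarith)
      have h2 : x < y * t ^ (y - x) := by
        have hc : x ^ (1 + x - y) < y := crux_12 x y hx hxy hy
        have h3 : x ^ (1 + x - y) * x ^ (y - x) = x := by
          rw [← Real.rpow_add hx]
          norm_num
        have hpow : 0 < x ^ (y - x) := Real.rpow_pos_of_pos hx _
        calc x = x ^ (1 + x - y) * x ^ (y - x) := h3.symm
          _ < y * x ^ (y - x) := by
              exact mul_lt_mul_of_pos_right hc hpow
          _ < y * t ^ (y - x) := by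
              exact mul_lt_mul_of_pos_left h1 (hx.trans hxy)
      -- x * t^x < y * t^y
      have h4 : x * t ^ x < y * t ^ y := by
        have hty : t ^ y = t ^ (y - x) * t ^ x := by
          rw [← Real.rpow_add ht0]; ring_nf
        rw [hty, ← mul_assoc]
        exact mul_lt_mul_of_pos_right h2 (Real.rpow_pos_of_pos ht0 x)
      have h5 : t ^ (x - 1) = t ^ x / t := by
        rw [Real.rpow_sub ht0, Real.rpow_one]
      have h6 : t ^ (y - 1) = t ^ y / t := by
        rw [Real.rpow_sub ht0, Real.rpow_one]
      rw [h5, h6, sub_neg]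
      rw [show x * (t ^ x / t) = x * t ^ x / t by ring,
        show y * (t ^ y / t) = y * t ^ y / t by ring]
      exact (div_lt_div_iff_of_pos_right ht0).mpr h4
  have hfz : f y < f z :=
    hanti (Set.mem_Icc.2 ⟨le_refl z, hzy.le⟩) (Set.mem_Icc.2 ⟨hzy.le, le_refl y⟩) hzy
  -- rewrite goal
  have ez : z ^ x * (z ^ (y - x) - 1) = z ^ y - z ^ x := by
    rw [mul_sub, mul_one, ← Real.rpow_add hz0]; ring_nf
  have ey : y ^ x * (y ^ (y - x) - 1) = y ^ y - y ^ x := by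
    rw [mul_sub, mul_one, ← Real.rpow_add hy0]; ring_nf
  rw [ez, ey]
  simp only [hf] at hfz
  linarith
end

section
/- For reals 0 < b < a < 1, one has a^{1-b} > b^{1-a}. -/
theorem stmt_14 (a b : ℝ) (hb : 0 < b) (hba : b < a) (ha : a < 1) :
    b ^ (1 - a) < a ^ (1 - b) := by
  have ha0 : 0 < a := hb.trans hba
  have h1b : 0 < 1 - b := by linarith
  have h1a : 0 < 1 - a := by linarith
  -- reduce to logarithms
  rw [show b ^ (1 - a) = Real.exp ((1 - a) * Real.log b) by
        rw [← Real.log_rpow hb, Real.exp_log (Real.rpow_pos_of_pos hb _)],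
      show a ^ (1 - b) = Real.exp ((1 - b) * Real.log a) by
        rw [← Real.log_rpow ha0, Real.exp_log (Real.rpow_pos_of_pos ha0 _)]]
  rw [Real.exp_lt_exp]
  -- key: log is strictly concave; a = p•b + q•1 with p = (1-a)/(1-b), q = (a-b)/(1-b)
  have key := strictConcaveOn_log_Ioi.2 (Set.mem_Ioi.2 hb) (Set.mem_Ioi.2 one_pos)
    (by linarith : b ≠ 1)
    (by positivity : (0:ℝ) < (1 - a) / (1 - b))
    (by apply div_pos <;> linarith : (0:ℝ) < (a - b) / (1 - b))
    (by rw [← add_div, div_eq_one_iff_eq h1b.ne']; ring)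
  have hcomb : ((1 - a) / (1 - b)) • b + ((a - b) / (1 - b)) • (1:ℝ) = a := by
    rw [smul_eq_mul, smul_eq_mul, div_mul_eq_mul_div, div_mul_eq_mul_div, ← add_div, div_eq_iff h1b.ne']
    ring
  rw [hcomb, Real.log_one, smul_eq_mul, smul_eq_mul, mul_zero, add_zero] at key
  -- key : (1-a)/(1-b) * log b < log a
  rw [div_mul_eq_mul_div, div_lt_iff₀ h1b] at key
  linarith
end

section
/- For reals 1 ≤ a and 0 < b < a, one has a^a + b^b > a^b + b^a. -/
theorem stmt_15 (a b : ℝ) (ha : 1 ≤ a) (hb : 0 < b) (hba : b < a) :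
    a ^ b + b ^ a < a ^ a + b ^ b := by
  have ha0 : (0:ℝ) < a := lt_of_lt_of_le one_pos ha
  set f : ℝ → ℝ := fun x => a ^ x - b ^ x with hf
  have hderiv : ∀ x : ℝ, HasDerivAt f (a ^ x * Real.log a - b ^ x * Real.log b) x := by
    intro x
    exact ((Real.hasStrictDerivAt_const_rpow ha0 x).hasDerivAt.sub
      (Real.hasStrictDerivAt_const_rpow hb x).hasDerivAt)
  have hmono : StrictMonoOn f (Set.Icc b a) := by
    apply strictMonoOn_of_deriv_pos (convex_Icc b a)
    · exact (continuous_iff_continuousAt.mpr fun x => (hderiv x).continuousAt).continuousOn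
    · intro x hx
      rw [interior_Icc] at hx
      rw [(hderiv x).deriv]
      have hx0 : 0 < x := lt_trans hb hx.1
      rcases le_or_gt b 1 with hb1 | hb1
      · have h1 : b ^ x * Real.log b ≤ 0 :=
          mul_nonpos_of_nonneg_of_nonpos (Real.rpow_pos_of_pos hb x).le
            (Real.log_nonpos hb.le hb1)
        rcases eq_or_lt_of_le ha with rfl | ha1
        · have hblt : b < 1 := hba
          have : b ^ x * Real.log b < 0 :=
            mul_neg_of_pos_of_neg (Real.rpow_pos_of_pos hb x)
              (Real.log_neg hb hblt)
          simp [Real.log_one]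
          linarith
        · have h2 : 0 < a ^ x * Real.log a :=
            mul_pos (Real.rpow_pos_of_pos ha0 x) (Real.log_pos ha1)
          linarith
      · have hlb : 0 < Real.log b := Real.log_pos hb1
        have hla : Real.log b < Real.log a := Real.log_lt_log hb hba
        have hrp : b ^ x < a ^ x := Real.rpow_lt_rpow hb.le hba hx0
        have h1 : 0 < b ^ x := Real.rpow_pos_of_pos hb x
        nlinarith
  have := hmono (Set.left_mem_Icc.mpr hba.le) (Set.right_mem_Icc.mpr hba.le) hba
  simp only [hf] at this
  linarith
end

section
/- If 0 < x < 1 and x < y < 1, then x < (y - x) x^{y - x} / (1 - x^{y - x}). -/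
theorem stmt_16 (x y : ℝ) (hx : 0 < x) (hxy : x < y) (hy : y < 1) :
    x < (y - x) * x ^ (y - x) / (1 - x ^ (y - x)) := by
  set t := y - x with ht
  have ht0 : 0 < t := by linarith
  have ht1 : t < 1 := by linarith
  have hx1 : x < 1 := lt_trans hxy hy
  have hxt0 : (0:ℝ) < x ^ t := Real.rpow_pos_of_pos hx t
  have hxt1 : x ^ t < 1 := Real.rpow_lt_one hx.le hx1 ht0
  rw [lt_div_iff₀ (by linarith)]
  -- need x * (1 - x^t) < t * x^t, i.e. x^(1-t) - x < t, i.e. x^(1-t) < x + (1-t) + ... 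
  have key : x ^ (1 - t) < t + x := by
    have hb := rpow_one_add_lt_one_add_mul_self (s := x - 1) (by linarith)
      (by linarith) (p := 1 - t) (by linarith) (by linarith)
    have : (1 + (x - 1)) = x := by ring
    rw [this] at hb
    nlinarith
  have h2 : x ^ (1 - t) * x ^ t < (t + x) * x ^ t := by
    exact mul_lt_mul_of_pos_right key hxt0
  rw [← Real.rpow_add hx, sub_add_cancel, Real.rpow_one] at h2
  nlinarith
end

section
/- For any even number n = 2m of positive reals a_1,...,a_{2m}, the infimum of ∑_{i=1}^{2m} a_i^{a_{2m+1-i}} over all positive reals a_i is m. -/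
lemma key_ineq {a b : ℝ} (ha : 0 < a) (hb : 0 < b) : 1 < a ^ b + b ^ a := by
  rcases le_or_gt 1 a with h1a | h1a
  · have h1 : 1 ≤ a ^ b := Real.one_le_rpow h1a hb.le
    have h2 : 0 < b ^ a := Real.rpow_pos_of_pos hb a
    linarith
  rcases le_or_gt 1 b with h1b | h1b
  · have h1 : 1 ≤ b ^ a := Real.one_le_rpow h1b ha.le
    have h2 : 0 < a ^ b := Real.rpow_pos_of_pos ha b
    linarith
  -- both < 1
  have hab : 0 < a + b := by linarith
  have claim : ∀ x y : ℝ, 0 < x → x < 1 → 0 < y → y < 1 → x / (x + y) < x ^ y := by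
    intro x y hx hx1 hy hy1
    have hgm : x ^ (1 - y) * 1 ^ y ≤ (1 - y) * x + y * 1 :=
      Real.geom_mean_le_arith_mean2_weighted (by linarith) hy.le hx.le zero_le_one (by ring)
    have h1 : x ^ (1 - y) < x + y := by
      rw [Real.one_rpow, mul_one] at hgm
      nlinarith
    have h2 : x ^ (1 - y) = x / x ^ y := by
      rw [Real.rpow_sub hx, Real.rpow_one]
    rw [h2, div_lt_iff₀ (Real.rpow_pos_of_pos hx y)] at h1
    rw [div_lt_iff₀ (by linarith)]
    linarith
  have ca := claim a b ha h1a hb h1b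
  have cb := claim b a hb h1b ha h1a
  have : a / (a + b) + b / (a + b) = 1 := by field_simp
  rw [add_comm b a] at cb
  linarith

theorem stmt_17 (m : ℕ) (hm : 1 ≤ m) :
    IsGLB {s : ℝ | ∃ a : Fin (2 * m) → ℝ, (∀ i, 0 < a i) ∧
      s = ∑ i : Fin (2 * m), a i ^ a (Fin.rev i)} (m : ℝ) := by
  constructor
  · rintro s ⟨a, hpos, rfl⟩
    set F : Fin (2 * m) → ℝ := fun i => a i ^ a (Fin.rev i) with hF
    have hrev : ∑ i : Fin (2 * m), F (Fin.rev i) = ∑ i : Fin (2 * m), F i :=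
      Fintype.sum_bijective Fin.rev Fin.rev_bijective _ _ (fun x => rfl)
    have hdouble : 2 * ∑ i : Fin (2 * m), F i = ∑ i : Fin (2 * m), (F i + F (Fin.rev i)) := by
      rw [Finset.sum_add_distrib, hrev]; ring
    have hlt : (2 * m : ℝ) < ∑ i : Fin (2 * m), (F i + F (Fin.rev i)) := by
      have : ∑ _i : Fin (2 * m), (1 : ℝ) < ∑ i : Fin (2 * m), (F i + F (Fin.rev i)) := by
        apply Finset.sum_lt_sum_of_nonempty
        · exact ⟨⟨0, by omega⟩, Finset.mem_univ _⟩
        · intro i _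
          have := key_ineq (hpos i) (hpos (Fin.rev i))
          simpa [hF, Fin.rev_rev] using this
      simpa using this
    have : (2 * m : ℝ) < 2 * ∑ i : Fin (2 * m), F i := by rw [hdouble]; exact hlt
    linarith
  · intro b hb
    by_contra hbm
    push_neg at hbm
    set ε : ℝ := (b - m) / (2 * m) with hε
    have hmpos : (0 : ℝ) < m := by exact_mod_cast hm
    have hεpos : 0 < ε := by
      apply div_pos <;> [linarith; positivity]
    set a : Fin (2 * m) → ℝ := fun i => if (i : ℕ) < m then ε else 1 with ha
    have hmem : (m * ε + m : ℝ) ∈ {s : ℝ | ∃ a : Fin (2 * m) → ℝ, (∀ i, 0 < a i) ∧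
        s = ∑ i : Fin (2 * m), a i ^ a (Fin.rev i)} := by
      refine ⟨a, fun i => ?_, ?_⟩
      · by_cases h : (i : ℕ) < m <;> simp [ha, h, hεpos]
      · have hterm : ∀ i : Fin (2 * m), a i ^ a (Fin.rev i) =
            if (i : ℕ) < m then ε else 1 := by
          intro i
          have hi2 : (i : ℕ) < 2 * m := i.isLt
          have hrv : ((Fin.rev i : Fin (2 * m)) : ℕ) = 2 * m - 1 - (i : ℕ) := by
            simp [Fin.val_rev]; omega
          by_cases h : (i : ℕ) < m
          · have hn : ¬ ((Fin.rev i : Fin (2 * m)) : ℕ) < m := by rw [hrv]; omega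
            have e1 : a i = ε := if_pos h
            have e2 : a (Fin.rev i) = 1 := if_neg hn
            rw [e1, e2, Real.rpow_one, if_pos h]
          · have hn : ((Fin.rev i : Fin (2 * m)) : ℕ) < m := by rw [hrv]; omega
            have e1 : a i = 1 := if_neg h
            have e2 : a (Fin.rev i) = ε := if_pos hn
            rw [e1, e2, Real.one_rpow, if_neg h]
        rw [Finset.sum_congr rfl (fun i _ => hterm i)]
        rw [Fin.sum_univ_eq_sum_range (fun k => if k < m then ε else (1:ℝ)) (2 * m)]
        rw [two_mul, Finset.sum_range_add]
        have h1 : ∑ i ∈ Finset.range m, (if i < m then ε else (1:ℝ)) = m * ε := by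
          have hc : ∀ i ∈ Finset.range m, (if i < m then ε else (1:ℝ)) = ε :=
            fun i hi => if_pos (Finset.mem_range.mp hi)
          rw [Finset.sum_congr rfl hc, Finset.sum_const, Finset.card_range, nsmul_eq_mul]
        have h2 : ∑ i ∈ Finset.range m, (if m + i < m then ε else (1:ℝ)) = m := by
          have hc : ∀ i ∈ Finset.range m, (if m + i < m then ε else (1:ℝ)) = 1 :=
            fun i _ => if_neg (by omega)
          rw [Finset.sum_congr rfl hc, Finset.sum_const, Finset.card_range, nsmul_eq_mul, mul_one]
        rw [h1, h2]
    have := hb hmem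
    have hme : (m : ℝ) * ε = (b - m) / 2 := by
      rw [hε]; field_simp
    rw [hme] at this
    linarith
end
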